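/- Under the conformal-block-expansion setup below, assume in addition: (i) there is τ_gap > 0 with τ_i ≥ τ_gap and p_i > 0 for every i ∈ I, and each i carries a spin ℓ_i ∈ ℕ; (ii) discreteness: for every Δ* ∈ ℝ the set {i ∈ I : τ_i + ℓ_i ≤ Δ*} is finite; (iii) approximate factorization: there exist 0 < a < b < 1, constants C₁, C₂ > 0 and functions F_i : (0,1) → (0,∞) such that for every i ∈ I with τ_i ≤ 2Δφ and all z, z̄ with 0 < z̄ ≤ a < b ≤ z < 1 one has C₁ · z̄^{τ_i/2} F_i(z) ≤ g_i(z, z̄) ≤ C₂ · z̄^{τ_i/2} F_i(z); (iv) individual logarithmic bounds: for every i ∈ I there is a finite C_i such that g_i(z, z̄) ≤ C_i · z̄^{τ_i/2} · log(4/(1−z)) for all 0 < z̄ ≤ a < b ≤ z < 1. Then there exists a sequence of pairwise distinct indices (i_k)_{k ∈ ℕ} in I such that τ_{i_k} → 2Δφ and ℓ_{i_k} → ∞ as k → ∞. -/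

import Mathlib

open Set Filter
open Topology

/-- A single conformal block contribution:
`g_i(z, z̄) = (z z̄)^(τᵢ/2) ∑_{n,m} a^{(i)}_{n,m} z^n z̄^m`. -/
noncomputable def blockFun (τi : ℝ) (coef : ℕ × ℕ → ℝ) (z zb : ℝ) : ℝ :=
  (z * zb) ^ (τi / 2) * ∑' nm : ℕ × ℕ, coef nm * z ^ nm.1 * zb ^ nm.2

lemma blockFun_nonneg {τi : ℝ} {c : ℕ × ℕ → ℝ} (hc : ∀ nm, 0 ≤ c nm)
    {z zb : ℝ} (hz : 0 ≤ z) (hzb : 0 ≤ zb) : 0 ≤ blockFun τi c z zb := by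
  unfold blockFun
  refine mul_nonneg (Real.rpow_nonneg (mul_nonneg hz hzb) _) ?_
  exact tsum_nonneg fun nm =>
    mul_nonneg (mul_nonneg (hc nm) (pow_nonneg hz _)) (pow_nonneg hzb _)

/-- scaling of the second argument downwards. -/
lemma block_scale_right {τi t : ℝ} (htτ : t ≤ τi) {c : ℕ × ℕ → ℝ} (hc : ∀ nm, 0 ≤ c nm)
    {z zb w : ℝ} (hz : 0 ≤ z) (hzb : 0 < zb) (hzbw : zb ≤ w) (hw : w < 1)
    (hs : Summable fun nm : ℕ × ℕ => c nm * z ^ nm.1 * w ^ nm.2) :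
    blockFun τi c z zb ≤ (zb / w) ^ (t / 2) * blockFun τi c z w := by
  have hw0 : 0 < w := lt_of_lt_of_le hzb hzbw
  have hterm : ∀ nm : ℕ × ℕ, c nm * z ^ nm.1 * zb ^ nm.2 ≤ c nm * z ^ nm.1 * w ^ nm.2 := by
    intro nm
    exact mul_le_mul_of_nonneg_left (pow_le_pow_left₀ hzb.le hzbw _)
      (mul_nonneg (hc nm) (pow_nonneg hz _))
  have hs' : Summable fun nm : ℕ × ℕ => c nm * z ^ nm.1 * zb ^ nm.2 :=
    hs.of_nonneg_of_le (fun nm => mul_nonneg (mul_nonneg (hc nm) (pow_nonneg hz _))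
      (pow_nonneg hzb.le _)) hterm
  have hT : (∑' nm : ℕ × ℕ, c nm * z ^ nm.1 * zb ^ nm.2)
      ≤ ∑' nm : ℕ × ℕ, c nm * z ^ nm.1 * w ^ nm.2 := Summable.tsum_le_tsum hterm hs' hs
  have hTnn : 0 ≤ ∑' nm : ℕ × ℕ, c nm * z ^ nm.1 * zb ^ nm.2 :=
    tsum_nonneg fun nm => mul_nonneg (mul_nonneg (hc nm) (pow_nonneg hz _)) (pow_nonneg hzb.le _)
  have hbase : z * zb = (zb / w) * (z * w) := by field_simp
  have hpow : (z * zb) ^ (τi / 2) = (zb / w) ^ (τi / 2) * (z * w) ^ (τi / 2) := by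
    rw [hbase, Real.mul_rpow (div_nonneg hzb.le hw0.le) (mul_nonneg hz hw0.le)]
  have hexp : (zb / w) ^ (τi / 2) ≤ (zb / w) ^ (t / 2) :=
    Real.rpow_le_rpow_of_exponent_ge (div_pos hzb hw0) ((div_le_one hw0).2 hzbw)
      (by linarith)
  calc blockFun τi c z zb
      = (zb / w) ^ (τi / 2) * ((z * w) ^ (τi / 2) * ∑' nm : ℕ × ℕ, c nm * z ^ nm.1 * zb ^ nm.2) := by
        rw [blockFun, hpow]; ring
    _ ≤ (zb / w) ^ (t / 2) * ((z * w) ^ (τi / 2) * ∑' nm : ℕ × ℕ, c nm * z ^ nm.1 * w ^ nm.2) := by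
        refine mul_le_mul hexp ?_ ?_ (Real.rpow_nonneg (div_nonneg hzb.le hw0.le) _)
        · exact mul_le_mul_of_nonneg_left hT (Real.rpow_nonneg (mul_nonneg hz hw0.le) _)
        · exact mul_nonneg (Real.rpow_nonneg (mul_nonneg hz hw0.le) _) hTnn
    _ = (zb / w) ^ (t / 2) * blockFun τi c z w := by rw [blockFun]

/-- scaling of the first argument downwards. -/
lemma block_scale_left {τi t : ℝ} (htτ : t ≤ τi) {c : ℕ × ℕ → ℝ} (hc : ∀ nm, 0 ≤ c nm)
    {z zb w : ℝ} (hz : 0 < z) (hzb : 0 ≤ zb) (hzw : z ≤ w) (hw : w < 1)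
    (hs : Summable fun nm : ℕ × ℕ => c nm * w ^ nm.1 * zb ^ nm.2) :
    blockFun τi c z zb ≤ (z / w) ^ (t / 2) * blockFun τi c w zb := by
  have hw0 : 0 < w := lt_of_lt_of_le hz hzw
  have hterm : ∀ nm : ℕ × ℕ, c nm * z ^ nm.1 * zb ^ nm.2 ≤ c nm * w ^ nm.1 * zb ^ nm.2 := by
    intro nm
    refine mul_le_mul_of_nonneg_right ?_ (pow_nonneg hzb _)
    exact mul_le_mul_of_nonneg_left (pow_le_pow_left₀ hz.le hzw _) (hc nm)
  have hs' : Summable fun nm : ℕ × ℕ => c nm * z ^ nm.1 * zb ^ nm.2 :=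
    hs.of_nonneg_of_le (fun nm => mul_nonneg (mul_nonneg (hc nm) (pow_nonneg hz.le _))
      (pow_nonneg hzb _)) hterm
  have hT : (∑' nm : ℕ × ℕ, c nm * z ^ nm.1 * zb ^ nm.2)
      ≤ ∑' nm : ℕ × ℕ, c nm * w ^ nm.1 * zb ^ nm.2 := Summable.tsum_le_tsum hterm hs' hs
  have hTnn : 0 ≤ ∑' nm : ℕ × ℕ, c nm * z ^ nm.1 * zb ^ nm.2 :=
    tsum_nonneg fun nm => mul_nonneg (mul_nonneg (hc nm) (pow_nonneg hz.le _)) (pow_nonneg hzb _)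
  have hbase : z * zb = (z / w) * (w * zb) := by field_simp
  have hpow : (z * zb) ^ (τi / 2) = (z / w) ^ (τi / 2) * (w * zb) ^ (τi / 2) := by
    rw [hbase, Real.mul_rpow (div_nonneg hz.le hw0.le) (mul_nonneg hw0.le hzb)]
  have hexp : (z / w) ^ (τi / 2) ≤ (z / w) ^ (t / 2) :=
    Real.rpow_le_rpow_of_exponent_ge (div_pos hz hw0) ((div_le_one hw0).2 hzw)
      (by linarith)
  calc blockFun τi c z zb
      = (z / w) ^ (τi / 2) * ((w * zb) ^ (τi / 2) * ∑' nm : ℕ × ℕ, c nm * z ^ nm.1 * zb ^ nm.2) := by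
        rw [blockFun, hpow]; ring
    _ ≤ (z / w) ^ (t / 2) * ((w * zb) ^ (τi / 2) * ∑' nm : ℕ × ℕ, c nm * w ^ nm.1 * zb ^ nm.2) := by
        refine mul_le_mul hexp ?_ ?_ (Real.rpow_nonneg (div_nonneg hz.le hw0.le) _)
        · exact mul_le_mul_of_nonneg_left hT (Real.rpow_nonneg (mul_nonneg hw0.le hzb) _)
        · exact mul_nonneg (Real.rpow_nonneg (mul_nonneg hw0.le hzb) _) hTnn
    _ = (z / w) ^ (t / 2) * blockFun τi c w zb := by rw [blockFun]

/-- `(1-z)^Δφ · log(4/(1-z)) → 0` as `z → 1⁻`. -/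
lemma tendsto_onesub_rpow_mul_log {Δφ : ℝ} (hΔ : 0 < Δφ) :
    Tendsto (fun z : ℝ => (1 - z) ^ Δφ * Real.log (4 / (1 - z))) (𝓝[<] (1:ℝ)) (𝓝 0) := by
  have hsub : Tendsto (fun z : ℝ => 1 - z) (𝓝[<] (1:ℝ)) (𝓝[>] (0:ℝ)) := by
    rw [tendsto_nhdsWithin_iff]
    constructor
    · have h : Tendsto (fun z : ℝ => 1 - z) (𝓝 (1:ℝ)) (𝓝 (1 - 1)) :=
        tendsto_const_nhds.sub tendsto_id
      simpa using h.mono_left (nhdsWithin_le_nhds (s := Iio (1:ℝ)))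
    · exact eventually_mem_nhdsWithin.mono fun z hz => by
        simp only [mem_Iio] at hz; simpa using hz
  have h0 : Tendsto (fun u : ℝ => u ^ Δφ * Real.log (4 / u)) (𝓝[>] (0:ℝ)) (𝓝 0) := by
    have h1 : Tendsto (fun u : ℝ => Real.log u * u ^ Δφ) (𝓝[>] (0:ℝ)) (𝓝 0) :=
      tendsto_log_mul_rpow_nhdsGT_zero hΔ
    have h2 : Tendsto (fun u : ℝ => u ^ Δφ) (𝓝[>] (0:ℝ)) (𝓝 0) := by
      have hc : ContinuousAt (fun u : ℝ => u ^ Δφ) 0 :=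
        Real.continuousAt_rpow_const 0 Δφ (Or.inr hΔ.le)
      have := hc.tendsto.mono_left (nhdsWithin_le_nhds (s := Ioi (0:ℝ)))
      simpa [Real.zero_rpow hΔ.ne'] using this
    have h3 : Tendsto (fun u : ℝ => u ^ Δφ * Real.log 4 - Real.log u * u ^ Δφ)
        (𝓝[>] (0:ℝ)) (𝓝 0) := by
      simpa using (h2.mul_const (Real.log 4)).sub h1
    refine h3.congr' ?_
    filter_upwards [eventually_mem_nhdsWithin] with u hu
    have hu0 : 0 < u := hu
    rw [Real.log_div (by norm_num) hu0.ne']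
    ring
  exact h0.comp hsub

lemma tendsto_one_sub_Iio : Tendsto (fun z : ℝ => 1 - z) (𝓝[<] (1:ℝ)) (𝓝[>] (0:ℝ)) := by
  rw [tendsto_nhdsWithin_iff]
  constructor
  · have h : Tendsto (fun z : ℝ => 1 - z) (𝓝 (1:ℝ)) (𝓝 (1 - 1)) :=
      tendsto_const_nhds.sub tendsto_id
    simpa using h.mono_left (nhdsWithin_le_nhds (s := Iio (1:ℝ)))
  · exact eventually_mem_nhdsWithin.mono fun z hz => by
      simp only [mem_Iio] at hz; simpa using hz

lemma tendsto_rpow_nhdsGT_zero {c : ℝ} (hc : 0 < c) :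
    Tendsto (fun u : ℝ => u ^ c) (𝓝[>] (0:ℝ)) (𝓝 0) := by
  have hcont : ContinuousAt (fun u : ℝ => u ^ c) 0 :=
    Real.continuousAt_rpow_const 0 c (Or.inr hc.le)
  have := hcont.tendsto.mono_left (nhdsWithin_le_nhds (s := Ioi (0:ℝ)))
  simpa [Real.zero_rpow hc.ne'] using this

set_option maxHeartbeats 2000000 in
/-- Theorem 2.1(b), twist accumulation at `2Δφ`: in the
conformal-block-expansion setup with a twist gap, positive coefficients, a discrete
spectrum, approximate factorization, and individual logarithmic bounds, there is a
sequence of pairwise distinct indices with `τ_{i_k} → 2Δφ` and `ℓ_{i_k} → ∞`. -/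
theorem stmt4 {I : Type*} [Countable I] (Δφ : ℝ) (hΔ : 0 < Δφ)
    (p τ : I → ℝ) (coef : I → ℕ × ℕ → ℝ) (ℓ : I → ℕ)
    (hp : ∀ i, 0 < p i) (hτ : ∀ i, 0 ≤ τ i) (hcoef : ∀ i nm, 0 ≤ coef i nm)
    (hinner : ∀ i, ∀ z zb : ℝ, 0 ≤ z → z < 1 → 0 ≤ zb → zb < 1 →
      Summable (fun nm : ℕ × ℕ => coef i nm * z ^ nm.1 * zb ^ nm.2))
    (hsum : ∀ z zb : ℝ, z ∈ Ioo (0:ℝ) 1 → zb ∈ Ioo (0:ℝ) 1 →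
      Summable (fun i => p i * blockFun (τ i) (coef i) z zb))
    (hcross : ∀ z zb : ℝ, z ∈ Ioo (0:ℝ) 1 → zb ∈ Ioo (0:ℝ) 1 →
      1 + ∑' i, p i * blockFun (τ i) (coef i) z zb =
        (z * zb / ((1 - z) * (1 - zb))) ^ Δφ *
          (1 + ∑' i, p i * blockFun (τ i) (coef i) (1 - z) (1 - zb)))
    -- (i) twist gap
    (τgap : ℝ) (hgap : 0 < τgap) (hτgap : ∀ i, τgap ≤ τ i)
    -- (ii) discreteness
    (hdisc : ∀ Δstar : ℝ, {i : I | τ i + ℓ i ≤ Δstar}.Finite)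
    -- (iii) approximate factorization
    (a b : ℝ) (ha : 0 < a) (hab : a < b) (hb : b < 1)
    (C₁ C₂ : ℝ) (hC₁ : 0 < C₁) (hC₂ : 0 < C₂) (F : I → ℝ → ℝ)
    (hFpos : ∀ i, ∀ z : ℝ, 0 < z → z < 1 → 0 < F i z)
    (hfact : ∀ i, τ i ≤ 2 * Δφ → ∀ z zb : ℝ, 0 < zb → zb ≤ a → b ≤ z → z < 1 →
      C₁ * (zb ^ (τ i / 2) * F i z) ≤ blockFun (τ i) (coef i) z zb ∧
        blockFun (τ i) (coef i) z zb ≤ C₂ * (zb ^ (τ i / 2) * F i z))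
    -- (iv) individual logarithmic bounds
    (hlog : ∀ i, ∃ Ci : ℝ, ∀ z zb : ℝ, 0 < zb → zb ≤ a → b ≤ z → z < 1 →
      blockFun (τ i) (coef i) z zb ≤ Ci * zb ^ (τ i / 2) * Real.log (4 / (1 - z))) :
    ∃ seq : ℕ → I, Function.Injective seq ∧
      Tendsto (fun k => τ (seq k)) atTop (nhds (2 * Δφ)) ∧
      Tendsto (fun k => ℓ (seq k)) atTop atTop := by
  classical
  set G : ℝ → ℝ → ℝ := fun z zb => ∑' i, p i * blockFun (τ i) (coef i) z zb with hGdef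
  have hgnn : ∀ (i : I) (z zb : ℝ), 0 ≤ z → 0 ≤ zb → 0 ≤ blockFun (τ i) (coef i) z zb :=
    fun i z zb hz hzb => blockFun_nonneg (hcoef i) hz hzb
  have hGnn : ∀ z zb : ℝ, 0 ≤ z → 0 ≤ zb → 0 ≤ G z zb :=
    fun z zb hz hzb => tsum_nonneg fun i => mul_nonneg (hp i).le (hgnn i z zb hz hzb)
  have hb0 : 0 < b := ha.trans hab
  have ha1 : a < 1 := hab.trans hb
  -- vanishing of the crossed-channel sum as the first argument goes to 0
  have hB : ∀ v : ℝ, v ∈ Ioo (0:ℝ) 1 → Tendsto (fun u => G u v) (𝓝[>] (0:ℝ)) (𝓝 0) := by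
    intro v hv
    have hhalf : (1:ℝ)/2 < 1 := by norm_num
    have hup : Tendsto (fun u : ℝ => (u / (1/2)) ^ (τgap / 2) * G (1/2) v)
        (𝓝[>] (0:ℝ)) (𝓝 0) := by
      have h1 : Tendsto (fun u : ℝ => u / (1/2)) (𝓝[>] (0:ℝ)) (𝓝[>] (0:ℝ)) := by
        rw [tendsto_nhdsWithin_iff]
        constructor
        · have h : Tendsto (fun u : ℝ => u / (1/2)) (𝓝 (0:ℝ)) (𝓝 ((0:ℝ) / (1/2))) :=
            tendsto_id.div_const _
          simpa using h.mono_left (nhdsWithin_le_nhds (s := Ioi (0:ℝ)))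
        · exact eventually_mem_nhdsWithin.mono fun u hu => by
            simp only [mem_Ioi] at hu ⊢; positivity
      have h2 := (tendsto_rpow_nhdsGT_zero (by positivity : 0 < τgap/2)).comp h1
      simpa using h2.mul_const (G (1/2) v)
    refine squeeze_zero' ?_ ?_ hup
    · filter_upwards [eventually_mem_nhdsWithin] with u hu
      exact hGnn u v (le_of_lt hu) hv.1.le
    · filter_upwards [Ioo_mem_nhdsGT_of_mem (by norm_num : (0:ℝ) ∈ Ico (0:ℝ) (1/2))] with u hu
      have hsumu : Summable (fun i => p i * blockFun (τ i) (coef i) u v) :=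
        hsum u v ⟨hu.1, hu.2.trans hhalf⟩ hv
      have hsumhalf : Summable (fun i => p i * blockFun (τ i) (coef i) (1/2) v) :=
        hsum (1/2) v ⟨by norm_num, hhalf⟩ hv
      have hterm : ∀ i, p i * blockFun (τ i) (coef i) u v
          ≤ (u / (1/2)) ^ (τgap / 2) * (p i * blockFun (τ i) (coef i) (1/2) v) := by
        intro i
        have hbl := block_scale_left (hτgap i) (hcoef i) hu.1 hv.1.le hu.2.le hhalf
          (hinner i (1/2) v (by norm_num) hhalf hv.1.le hv.2)
        calc p i * blockFun (τ i) (coef i) u v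
            ≤ p i * ((u / (1/2)) ^ (τgap/2) * blockFun (τ i) (coef i) (1/2) v) :=
              mul_le_mul_of_nonneg_left hbl (hp i).le
          _ = (u / (1/2)) ^ (τgap/2) * (p i * blockFun (τ i) (coef i) (1/2) v) := by ring
      calc G u v ≤ ∑' i, (u / (1/2)) ^ (τgap/2) * (p i * blockFun (τ i) (coef i) (1/2) v) :=
            Summable.tsum_le_tsum hterm hsumu (hsumhalf.mul_left _)
        _ = (u / (1/2)) ^ (τgap/2) * G (1/2) v := tsum_mul_left
  -- the crossing limit
  have hstar : ∀ v : ℝ, v ∈ Ioo (0:ℝ) 1 →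
      Tendsto (fun z => (1 - z) ^ Δφ * G z v) (𝓝[<] (1:ℝ)) (𝓝 ((v / (1 - v)) ^ Δφ)) := by
    intro v hv
    obtain ⟨hv0, hv1⟩ := hv
    have h1v : 0 < 1 - v := by linarith
    have hEq : ∀ᶠ z in 𝓝[<] (1:ℝ),
        (z * v / (1 - v)) ^ Δφ * (1 + G (1 - z) (1 - v)) - (1 - z) ^ Δφ
          = (1 - z) ^ Δφ * G z v := by
      filter_upwards [Ioo_mem_nhdsLT_of_mem (by norm_num : (1:ℝ) ∈ Ioc (0:ℝ) 1)] with z hz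
      have hz0 := hz.1
      have hz1 := hz.2
      have h1z : 0 < 1 - z := by linarith
      have hcr := hcross z v ⟨hz0, hz1⟩ ⟨hv0, hv1⟩
      have hGzv : G z v = (z * v / ((1 - z) * (1 - v))) ^ Δφ * (1 + G (1 - z) (1 - v)) - 1 := by
        simp only [hGdef] at *
        linarith [hcr]
      have hRnn : (0:ℝ) ≤ z * v / ((1 - z) * (1 - v)) := by positivity
      have hmul : (1 - z) ^ Δφ * (z * v / ((1 - z) * (1 - v))) ^ Δφ = (z * v / (1 - v)) ^ Δφ := by
        rw [← Real.mul_rpow h1z.le hRnn]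
        congr 1
        field_simp
      calc (z * v / (1 - v)) ^ Δφ * (1 + G (1 - z) (1 - v)) - (1 - z) ^ Δφ
          = (1 - z) ^ Δφ * (z * v / ((1 - z) * (1 - v))) ^ Δφ * (1 + G (1 - z) (1 - v))
              - (1 - z) ^ Δφ := by rw [hmul]
        _ = (1 - z) ^ Δφ * G z v := by rw [hGzv]; ring
    have hA : Tendsto (fun z : ℝ => (z * v / (1 - v)) ^ Δφ) (𝓝[<] (1:ℝ))
        (𝓝 ((1 * v / (1 - v)) ^ Δφ)) := by
      have hcont : ContinuousAt (fun z : ℝ => (z * v / (1 - v)) ^ Δφ) 1 := by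
        apply ContinuousAt.rpow_const
        · exact (continuousAt_id.mul continuousAt_const).div_const _
        · right; exact hΔ.le
      exact hcont.tendsto.mono_left (nhdsWithin_le_nhds (s := Iio (1:ℝ)))
    have hBv : Tendsto (fun z : ℝ => G (1 - z) (1 - v)) (𝓝[<] (1:ℝ)) (𝓝 0) :=
      (hB (1 - v) ⟨h1v, by linarith⟩).comp tendsto_one_sub_Iio
    have hCz : Tendsto (fun z : ℝ => (1 - z) ^ Δφ) (𝓝[<] (1:ℝ)) (𝓝 0) :=
      (tendsto_rpow_nhdsGT_zero hΔ).comp tendsto_one_sub_Iio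
    have hlim := (hA.mul ((tendsto_const_nhds (x := (1:ℝ))).add hBv)).sub hCz
    simp only [one_mul, add_zero, mul_one, sub_zero] at hlim
    exact Tendsto.congr' hEq hlim
  -- infinitely many twists in every neighborhood of 2Δφ
  have hinf : ∀ ε : ℝ, 0 < ε → {i : I | |τ i - 2 * Δφ| < ε}.Infinite := by
    intro ε hε
    by_contra hfin
    rw [Set.not_infinite] at hfin
    choose Ci hCi using hlog
    set M : Finset I := hfin.toFinset with hMdef
    have h1a : 0 < 1 - a := by linarith
    -- the key inequality, for every 0 < zb ≤ a
    have key : ∀ zb : ℝ, 0 < zb → zb ≤ a →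
        (zb / (1 - zb)) ^ Δφ ≤
          (zb / a) ^ ((2 * Δφ + ε) / 2) * (a / (1 - a)) ^ Δφ
            + (C₂ / C₁) * (zb / zb ^ 2) ^ ((2 * Δφ - ε) / 2)
              * (zb ^ 2 / (1 - zb ^ 2)) ^ Δφ := by
      intro zb hzb0 hzba
      have hzb1 : zb < 1 := lt_of_le_of_lt hzba ha1
      have hzb'0 : 0 < zb ^ 2 := by positivity
      have hzb'zb : zb ^ 2 ≤ zb := by nlinarith
      have hzb'a : zb ^ 2 ≤ a := le_trans hzb'zb hzba
      have hzb'1 : zb ^ 2 < 1 := lt_of_le_of_lt hzb'a ha1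
      set cH : ℝ := (zb / a) ^ ((2 * Δφ + ε) / 2) with hcH
      set cS : ℝ := (C₂ / C₁) * (zb / zb ^ 2) ^ ((2 * Δφ - ε) / 2) with hcS
      have hcHnn : 0 ≤ cH := Real.rpow_nonneg (by positivity) _
      have hcSnn : 0 ≤ cS := mul_nonneg (by positivity) (Real.rpow_nonneg (by positivity) _)
      set CM : ℝ := ∑ i ∈ M, p i * (Ci i * zb ^ (τ i / 2)) with hCM
      -- pointwise estimate
      have hpt : ∀ z : ℝ, b ≤ z → z < 1 →
          G z zb ≤ CM * Real.log (4 / (1 - z)) + (cH * G z a + cS * G z (zb ^ 2)) := by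
        intro z hbz hz1
        have hz0 : 0 < z := lt_of_lt_of_le hb0 hbz
        have hsummb := hsum z zb ⟨hz0, hz1⟩ ⟨hzb0, hzb1⟩
        have hsuma := hsum z a ⟨hz0, hz1⟩ ⟨ha, ha1⟩
        have hsums := hsum z (zb ^ 2) ⟨hz0, hz1⟩ ⟨hzb'0, hzb'1⟩
        have hsplit := Summable.sum_add_tsum_compl (s := M) hsummb
        have hMpart : ∑ i ∈ M, p i * blockFun (τ i) (coef i) z zb
            ≤ CM * Real.log (4 / (1 - z)) := by
          rw [hCM, Finset.sum_mul]
          refine Finset.sum_le_sum fun i _ => ?_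
          have h := hCi i z zb hzb0 hzba hbz hz1
          calc p i * blockFun (τ i) (coef i) z zb
              ≤ p i * (Ci i * zb ^ (τ i / 2) * Real.log (4 / (1 - z))) :=
                mul_le_mul_of_nonneg_left h (hp i).le
            _ = p i * (Ci i * zb ^ (τ i / 2)) * Real.log (4 / (1 - z)) := by ring
        have hCpart : (∑' j : ↑(↑M : Set I)ᶜ, p ↑j * blockFun (τ ↑j) (coef ↑j) z zb)
            ≤ cH * G z a + cS * G z (zb ^ 2) := by
          have hterm : ∀ j : ↑(↑M : Set I)ᶜ,
              p ↑j * blockFun (τ ↑j) (coef ↑j) z zb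
                ≤ cH * (p ↑j * blockFun (τ ↑j) (coef ↑j) z a)
                  + cS * (p ↑j * blockFun (τ ↑j) (coef ↑j) z (zb ^ 2)) := by
            rintro ⟨i, hi⟩
            have hiM : ¬ |τ i - 2 * Δφ| < ε := by
              intro hcon
              exact hi (Finset.mem_coe.mpr (hfin.mem_toFinset.mpr hcon))
            have habs : ε ≤ |τ i - 2 * Δφ| := not_lt.mp hiM
            rcases le_abs.mp habs with hhi | hlo
            · -- high twist
              have hτi : 2 * Δφ + ε ≤ τ i := by linarith
              have hbl := block_scale_right hτi (hcoef i) hz0.le hzb0 hzba ha1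
                (hinner i z a hz0.le hz1 ha.le ha1)
              have h1 : p i * blockFun (τ i) (coef i) z zb
                  ≤ cH * (p i * blockFun (τ i) (coef i) z a) := by
                calc p i * blockFun (τ i) (coef i) z zb
                    ≤ p i * ((zb / a) ^ ((2 * Δφ + ε) / 2) * blockFun (τ i) (coef i) z a) :=
                      mul_le_mul_of_nonneg_left hbl (hp i).le
                  _ = cH * (p i * blockFun (τ i) (coef i) z a) := by rw [hcH]; ring
              refine le_add_of_le_of_nonneg h1 ?_
              exact mul_nonneg hcSnn
                (mul_nonneg (hp i).le (hgnn i z (zb ^ 2) hz0.le hzb'0.le))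
            · -- low twist
              have hτi : τ i ≤ 2 * Δφ - ε := by linarith
              have hτi2 : τ i ≤ 2 * Δφ := by linarith
              have h2 := (hfact i hτi2 z zb hzb0 hzba hbz hz1).2
              have h1 := (hfact i hτi2 z (zb ^ 2) hzb'0 hzb'a hbz hz1).1
              have hQ1 : (1:ℝ) ≤ zb / zb ^ 2 := (one_le_div hzb'0).2 hzb'zb
              have hQle : (zb / zb ^ 2) ^ (τ i / 2) ≤ (zb / zb ^ 2) ^ ((2 * Δφ - ε) / 2) :=
                Real.rpow_le_rpow_of_exponent_le hQ1 (by linarith)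
              have hblock' : 0 ≤ blockFun (τ i) (coef i) z (zb ^ 2) :=
                hgnn i z _ hz0.le hzb'0.le
              have hPP : zb ^ (τ i / 2)
                  = (zb / zb ^ 2) ^ (τ i / 2) * (zb ^ 2) ^ (τ i / 2) := by
                rw [← Real.mul_rpow (by positivity) (by positivity)]
                congr 1
                field_simp
              have hchain : blockFun (τ i) (coef i) z zb
                  ≤ cS * blockFun (τ i) (coef i) z (zb ^ 2) := by
                calc blockFun (τ i) (coef i) z zb
                    ≤ C₂ * (zb ^ (τ i / 2) * F i z) := h2
                  _ = C₂ / C₁ * (zb / zb ^ 2) ^ (τ i / 2)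
                      * (C₁ * ((zb ^ 2) ^ (τ i / 2) * F i z)) := by
                      rw [hPP]; field_simp
                  _ ≤ C₂ / C₁ * (zb / zb ^ 2) ^ (τ i / 2)
                      * blockFun (τ i) (coef i) z (zb ^ 2) := by
                      refine mul_le_mul_of_nonneg_left h1 ?_
                      have : (0:ℝ) ≤ (zb / zb ^ 2) ^ (τ i / 2) :=
                        Real.rpow_nonneg (by positivity) _
                      positivity
                  _ ≤ C₂ / C₁ * (zb / zb ^ 2) ^ ((2 * Δφ - ε) / 2)
                      * blockFun (τ i) (coef i) z (zb ^ 2) := by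
                      refine mul_le_mul_of_nonneg_right ?_ hblock'
                      exact mul_le_mul_of_nonneg_left hQle (by positivity)
                  _ = cS * blockFun (τ i) (coef i) z (zb ^ 2) := by rw [hcS]
              have h1' : p i * blockFun (τ i) (coef i) z zb
                  ≤ cS * (p i * blockFun (τ i) (coef i) z (zb ^ 2)) := by
                calc p i * blockFun (τ i) (coef i) z zb
                    ≤ p i * (cS * blockFun (τ i) (coef i) z (zb ^ 2)) :=
                      mul_le_mul_of_nonneg_left hchain (hp i).le
                  _ = cS * (p i * blockFun (τ i) (coef i) z (zb ^ 2)) := by ring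
              refine le_add_of_nonneg_of_le ?_ h1'
              exact mul_nonneg hcHnn (mul_nonneg (hp i).le (hgnn i z a hz0.le ha.le))
          have hsubM : Summable (fun j : ↑(↑M : Set I)ᶜ =>
              p ↑j * blockFun (τ ↑j) (coef ↑j) z zb) := hsummb.subtype _
          have hsubA : Summable (fun j : ↑(↑M : Set I)ᶜ =>
              cH * (p ↑j * blockFun (τ ↑j) (coef ↑j) z a)) := (hsuma.subtype _).mul_left cH
          have hsubS : Summable (fun j : ↑(↑M : Set I)ᶜ =>
              cS * (p ↑j * blockFun (τ ↑j) (coef ↑j) z (zb ^ 2))) := (hsums.subtype _).mul_left cS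
          calc (∑' j : ↑(↑M : Set I)ᶜ, p ↑j * blockFun (τ ↑j) (coef ↑j) z zb)
              ≤ ∑' j : ↑(↑M : Set I)ᶜ,
                  (cH * (p ↑j * blockFun (τ ↑j) (coef ↑j) z a)
                    + cS * (p ↑j * blockFun (τ ↑j) (coef ↑j) z (zb ^ 2))) :=
                Summable.tsum_le_tsum hterm hsubM (hsubA.add hsubS)
            _ = cH * (∑' j : ↑(↑M : Set I)ᶜ, p ↑j * blockFun (τ ↑j) (coef ↑j) z a)
                + cS * (∑' j : ↑(↑M : Set I)ᶜ, p ↑j * blockFun (τ ↑j) (coef ↑j) z (zb ^ 2)) := by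
                rw [Summable.tsum_add hsubA hsubS, tsum_mul_left, tsum_mul_left]
            _ ≤ cH * G z a + cS * G z (zb ^ 2) := by
                refine add_le_add (mul_le_mul_of_nonneg_left ?_ hcHnn)
                  (mul_le_mul_of_nonneg_left ?_ hcSnn)
                · exact Summable.tsum_subtype_le _ _
                    (fun i => mul_nonneg (hp i).le (hgnn i z a hz0.le ha.le)) hsuma
                · exact Summable.tsum_subtype_le _ _
                    (fun i => mul_nonneg (hp i).le (hgnn i z _ hz0.le hzb'0.le)) hsums
        have hGz : G z zb = ∑' i, p i * blockFun (τ i) (coef i) z zb := rfl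
        linarith [hsplit, hMpart, hCpart]
      -- pass to the limit z → 1⁻
      have hZb := hstar zb ⟨hzb0, hzb1⟩
      have hZa := hstar a ⟨ha, ha1⟩
      have hZs := hstar (zb ^ 2) ⟨hzb'0, hzb'1⟩
      have hML := (tendsto_onesub_rpow_mul_log hΔ).const_mul CM
      have hRHS := hML.add ((hZa.const_mul cH).add (hZs.const_mul cS))
      have hEv : (fun z => (1 - z) ^ Δφ * G z zb) ≤ᶠ[𝓝[<] (1:ℝ)]
          (fun z => CM * ((1 - z) ^ Δφ * Real.log (4 / (1 - z)))
            + (cH * ((1 - z) ^ Δφ * G z a) + cS * ((1 - z) ^ Δφ * G z (zb ^ 2)))) := by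
        filter_upwards [Ioo_mem_nhdsLT_of_mem (⟨hb, le_refl 1⟩ : (1:ℝ) ∈ Ioc b 1)] with z hz
        have hpow0 : (0:ℝ) ≤ (1 - z) ^ Δφ := Real.rpow_nonneg (by linarith [hz.2]) _
        calc (1 - z) ^ Δφ * G z zb
            ≤ (1 - z) ^ Δφ * (CM * Real.log (4 / (1 - z)) + (cH * G z a + cS * G z (zb ^ 2))) :=
              mul_le_mul_of_nonneg_left (hpt z hz.1.le hz.2) hpow0
          _ = CM * ((1 - z) ^ Δφ * Real.log (4 / (1 - z)))
              + (cH * ((1 - z) ^ Δφ * G z a) + cS * ((1 - z) ^ Δφ * G z (zb ^ 2))) := by ring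
      have hfin' := le_of_tendsto_of_tendsto hZb hRHS hEv
      have hrw : cS * (zb ^ 2 / (1 - zb ^ 2)) ^ Δφ
          = C₂ / C₁ * (zb / zb ^ 2) ^ ((2 * Δφ - ε) / 2) * (zb ^ 2 / (1 - zb ^ 2)) ^ Δφ := by
        rw [hcS]
      have hrwH : cH * (a / (1 - a)) ^ Δφ = (zb / a) ^ ((2 * Δφ + ε) / 2) * (a / (1 - a)) ^ Δφ := by
        rw [hcH]
      linarith [hfin']
    -- numeric contradiction
    set K : ℝ := (a / (1 - a)) ^ Δφ / a ^ ((2 * Δφ + ε) / 2) + (C₂ / C₁) / (1 - a ^ 2) ^ Δφ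
      with hKdef
    have hnum : ∀ zb : ℝ, 0 < zb → zb ≤ a → 1 ≤ K * zb ^ (ε / 2) := by
      intro zb hzb0 hzba
      have hzb1 : zb < 1 := lt_of_le_of_lt hzba ha1
      have h1zb : 0 < 1 - zb := by linarith
      have h1a2 : 0 < 1 - a ^ 2 := by nlinarith
      have h1zb2 : 0 < 1 - zb ^ 2 := by nlinarith
      have hkey := key zb hzb0 hzba
      have s1 : zb ^ Δφ ≤ (zb / (1 - zb)) ^ Δφ := by
        refine Real.rpow_le_rpow hzb0.le ?_ hΔ.le
        rw [le_div_iff₀ h1zb]; nlinarith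
      have haeplus : (0:ℝ) < a ^ ((2 * Δφ + ε) / 2) := Real.rpow_pos_of_pos ha _
      have s2 : (zb / a) ^ ((2 * Δφ + ε) / 2) * (a / (1 - a)) ^ Δφ
          = zb ^ ((2 * Δφ + ε) / 2) * ((a / (1 - a)) ^ Δφ / a ^ ((2 * Δφ + ε) / 2)) := by
        rw [Real.div_rpow hzb0.le ha.le]
        field_simp
      have hq : zb / zb ^ 2 = zb⁻¹ := by
        field_simp [sq]
      have hQinv : (zb / zb ^ 2) ^ ((2 * Δφ - ε) / 2) = (zb ^ ((2 * Δφ - ε) / 2))⁻¹ := by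
        rw [hq, Real.inv_rpow hzb0.le]
      have hfrac : (zb ^ 2 / (1 - zb ^ 2)) ^ Δφ ≤ zb ^ (2 * Δφ) / (1 - a ^ 2) ^ Δφ := by
        have hmono : zb ^ 2 / (1 - zb ^ 2) ≤ zb ^ 2 / (1 - a ^ 2) := by
          rw [div_le_div_iff₀ h1zb2 h1a2]
          have h2 : zb ^ 2 ≤ a ^ 2 := by nlinarith
          nlinarith [mul_le_mul_of_nonneg_left h2 (sq_nonneg zb)]
        calc (zb ^ 2 / (1 - zb ^ 2)) ^ Δφ
            ≤ (zb ^ 2 / (1 - a ^ 2)) ^ Δφ := Real.rpow_le_rpow (by positivity) hmono hΔ.le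
          _ = (zb ^ 2) ^ Δφ / (1 - a ^ 2) ^ Δφ := Real.div_rpow (by positivity) h1a2.le _
          _ = zb ^ (2 * Δφ) / (1 - a ^ 2) ^ Δφ := by
              rw [← Real.rpow_natCast zb 2, ← Real.rpow_mul hzb0.le]
              norm_num
      have hsplitpow : zb ^ (2 * Δφ) = zb ^ ((2 * Δφ - ε) / 2) * zb ^ ((2 * Δφ + ε) / 2) := by
        rw [← Real.rpow_add hzb0]; ring_nf
      have heminus : (0:ℝ) < zb ^ ((2 * Δφ - ε) / 2) := Real.rpow_pos_of_pos hzb0 _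
      have hcomb : (zb / zb ^ 2) ^ ((2 * Δφ - ε) / 2) * (zb ^ 2 / (1 - zb ^ 2)) ^ Δφ
          ≤ zb ^ ((2 * Δφ + ε) / 2) / (1 - a ^ 2) ^ Δφ := by
        rw [hQinv]
        calc (zb ^ ((2 * Δφ - ε) / 2))⁻¹ * (zb ^ 2 / (1 - zb ^ 2)) ^ Δφ
            ≤ (zb ^ ((2 * Δφ - ε) / 2))⁻¹ * (zb ^ (2 * Δφ) / (1 - a ^ 2) ^ Δφ) :=
              mul_le_mul_of_nonneg_left hfrac (by positivity)
          _ = zb ^ ((2 * Δφ + ε) / 2) / (1 - a ^ 2) ^ Δφ := by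
              rw [hsplitpow]
              field_simp
      have heps : zb ^ ((2 * Δφ + ε) / 2) = zb ^ Δφ * zb ^ (ε / 2) := by
        rw [← Real.rpow_add hzb0]; ring_nf
      have hPpos : (0:ℝ) < zb ^ Δφ := Real.rpow_pos_of_pos hzb0 _
      have hC21 : (0:ℝ) ≤ C₂ / C₁ := by positivity
      have hfinal : zb ^ Δφ ≤ zb ^ Δφ * (K * zb ^ (ε / 2)) := by
        have t2 : C₂ / C₁ * ((zb / zb ^ 2) ^ ((2 * Δφ - ε) / 2) * (zb ^ 2 / (1 - zb ^ 2)) ^ Δφ)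
            ≤ C₂ / C₁ * (zb ^ ((2 * Δφ + ε) / 2) / (1 - a ^ 2) ^ Δφ) :=
          mul_le_mul_of_nonneg_left hcomb hC21
        have hassoc : C₂ / C₁ * (zb / zb ^ 2) ^ ((2 * Δφ - ε) / 2) * (zb ^ 2 / (1 - zb ^ 2)) ^ Δφ
            = C₂ / C₁ * ((zb / zb ^ 2) ^ ((2 * Δφ - ε) / 2) * (zb ^ 2 / (1 - zb ^ 2)) ^ Δφ) := by
          ring
        calc zb ^ Δφ ≤ (zb / (1 - zb)) ^ Δφ := s1
          _ ≤ (zb / a) ^ ((2 * Δφ + ε) / 2) * (a / (1 - a)) ^ Δφ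
              + C₂ / C₁ * (zb / zb ^ 2) ^ ((2 * Δφ - ε) / 2)
                * (zb ^ 2 / (1 - zb ^ 2)) ^ Δφ := hkey
          _ ≤ zb ^ ((2 * Δφ + ε) / 2) * ((a / (1 - a)) ^ Δφ / a ^ ((2 * Δφ + ε) / 2))
              + C₂ / C₁ * (zb ^ ((2 * Δφ + ε) / 2) / (1 - a ^ 2) ^ Δφ) := by
              rw [s2]
              linarith [t2, hassoc]
          _ = zb ^ Δφ * (K * zb ^ (ε / 2)) := by
              rw [heps, hKdef]; ring
      exact (le_mul_iff_one_le_right hPpos).mp hfinal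
    have htend : Tendsto (fun x : ℝ => K * x ^ (ε / 2)) (𝓝[>] (0:ℝ)) (𝓝 0) := by
      have := (tendsto_rpow_nhdsGT_zero (by positivity : 0 < ε / 2)).const_mul K
      simpa using this
    have hev1 : ∀ᶠ x : ℝ in 𝓝[>] (0:ℝ), K * x ^ (ε / 2) < 1 :=
      htend.eventually_lt_const zero_lt_one
    have hev2 : ∀ᶠ x : ℝ in 𝓝[>] (0:ℝ), x ∈ Ioo (0:ℝ) a :=
      Ioo_mem_nhdsGT_of_mem ⟨le_refl (0:ℝ), ha⟩
    obtain ⟨x, hx1, hx2⟩ := (hev1.and hev2).exists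
    exact absurd (hnum x hx2.1 hx2.2.le) (not_le.mpr hx1)
  -- construct the sequence
  have hpick : ∀ (n : ℕ) (s : Finset I), ∃ i, |τ i - 2 * Δφ| < 1 / (n + 1) ∧ i ∉ s := by
    intro n s
    obtain ⟨i, hi, his⟩ := (hinf (1 / (n + 1)) (by positivity)).exists_notMem_finset s
    exact ⟨i, hi, his⟩
  choose f hf1 hf2 using hpick
  let Fn : ℕ → I × Finset I := fun n =>
    Nat.rec (motive := fun _ => I × Finset I) (f 0 ∅, {f 0 ∅})
      (fun n ih => (f (n + 1) ih.2, insert (f (n + 1) ih.2) ih.2)) n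
  have hFs : ∀ n, Fn (n + 1) = (f (n + 1) (Fn n).2, insert (f (n + 1) (Fn n).2) (Fn n).2) :=
    fun n => rfl
  have hmem : ∀ n, (Fn n).1 ∈ (Fn n).2 := by
    intro n
    cases n with
    | zero => exact Finset.mem_singleton_self _
    | succ n => rw [hFs]; exact Finset.mem_insert_self _ _
  have hmono : Monotone fun n => (Fn n).2 := by
    apply monotone_nat_of_le_succ
    intro n
    rw [hFs]
    exact Finset.subset_insert _ _
  have hlt : ∀ m n, m < n → (Fn m).1 ≠ (Fn n).1 := by
    intro m n hmn
    obtain ⟨k, rfl⟩ : ∃ k, n = k + 1 := ⟨n - 1, by omega⟩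
    have h1 : (Fn m).1 ∈ (Fn k).2 := hmono (by omega : m ≤ k) (hmem m)
    have h2 : (Fn (k + 1)).1 ∉ (Fn k).2 := by
      rw [hFs]
      exact hf2 (k + 1) (Fn k).2
    intro he
    rw [he] at h1
    exact h2 h1
  have hinj : Function.Injective fun n => (Fn n).1 := by
    intro m n he
    by_contra hne
    rcases Nat.lt_or_ge m n with h | h
    · exact hlt m n h he
    · exact hlt n m (by omega) he.symm
  have habs : ∀ n : ℕ, |τ (Fn n).1 - 2 * Δφ| < 1 / ((n : ℝ) + 1) := by
    intro n
    cases n with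
    | zero => exact_mod_cast hf1 0 ∅
    | succ n =>
      rw [hFs]
      exact_mod_cast hf1 (n + 1) (Fn n).2
  refine ⟨fun n => (Fn n).1, hinj, ?_, ?_⟩
  · -- τ tendsto
    have h0 : Tendsto (fun n : ℕ => 1 / ((n : ℝ) + 1)) atTop (𝓝 0) :=
      tendsto_one_div_add_atTop_nhds_zero_nat
    have habs' : Tendsto (fun n => |τ (Fn n).1 - 2 * Δφ|) atTop (𝓝 0) :=
      squeeze_zero (fun n => abs_nonneg _) (fun n => (habs n).le) h0
    rw [tendsto_iff_dist_tendsto_zero]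
    simpa [Real.dist_eq] using habs'
  · -- ℓ tendsto atTop
    rw [tendsto_atTop]
    intro N
    have hfinB := hdisc (2 * Δφ + 1 + N)
    have hpre : ((fun n => (Fn n).1) ⁻¹' {i : I | τ i + ℓ i ≤ 2 * Δφ + 1 + N}).Finite :=
      hfinB.preimage hinj.injOn
    have h1 : ∀ᶠ n : ℕ in atTop, n ∉ (fun n => (Fn n).1) ⁻¹' {i : I | τ i + ℓ i ≤ 2 * Δφ + 1 + N} := by
      have := hpre.eventually_cofinite_notMem
      rwa [Nat.cofinite_eq_atTop] at this
    filter_upwards [h1] with n hn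
    simp only [Set.mem_preimage, Set.mem_setOf_eq, not_le] at hn
    have hle1 : 1 / ((n : ℝ) + 1) ≤ 1 := by
      rw [div_le_one (by positivity)]
      linarith [Nat.cast_nonneg (α := ℝ) n]
    have ht : τ (Fn n).1 < 2 * Δφ + 1 := by
      have h2 := (abs_lt.mp (habs n)).2
      linarith
    have hN : (N : ℝ) < (ℓ (Fn n).1 : ℝ) := by linarith
    exact_mod_cast hN.le
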